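/- Let u be a C² solution of u'' + ((N-1)/r)u' + f(u) = 0 on (0,∞), with f continuous, F(s) = ∫₀ˢ f(t)dt, and I(r) = |u'(r)|²/2 + F(u(r)). Suppose |u'(r)| ≤ K for all r ∈ [r₁, r₂] and u is monotone on [r₁, r₂] with |u(r₂) - u(r₁)| = L. Then I(r₂) ≥ I(r₁)(1 - (K/I(r₁)) · ((N-1)L/r₁)), provided I(r₁) > 0. -/

import Mathlib

open Set

private lemma energy_hasDerivAt
    (c : ℝ) (f : ℝ → ℝ) (hf : Continuous f) (u u' : ℝ → ℝ) (C : ℝ) (r : ℝ)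
    (hu : HasDerivAt u (u' r) r)
    (hode : HasDerivAt u' (-(c / r * u' r + f (u r))) r) :
    HasDerivAt (fun s => (u' s) ^ 2 / 2 + (∫ t in (0:ℝ)..(u s), f t) + C * u s)
      (-(c / r * (u' r) ^ 2) + C * u' r) r := by
  have hF : HasDerivAt (fun s => ∫ t in (0:ℝ)..(u s), f t) (f (u r) * u' r) r := by
    have h1 : HasDerivAt (fun y => ∫ t in (0:ℝ)..y, f t) (f (u r)) (u r) :=
      intervalIntegral.integral_hasDerivAt_right (hf.intervalIntegrable _ _)
        (hf.stronglyMeasurableAtFilter _ _) hf.continuousAt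
    exact h1.comp r hu
  have hsq : HasDerivAt (fun s => (u' s) ^ 2 / 2)
      ((2 * (u' r) ^ 1 * (-(c / r * u' r + f (u r)))) / 2) r :=
    (hode.pow 2).div_const 2
  have hC : HasDerivAt (fun s => C * u s) (C * u' r) r := hu.const_mul C
  have := (hsq.add hF).add hC
  exact this.congr_deriv (by ring)

/-- Energy loss estimate: I(r₂) ≥ I(r₁)(1 - (K/I(r₁))·((N-1)L/r₁)). -/
theorem energy_loss_estimate
    (N : ℕ) (hN : 2 ≤ N) (f : ℝ → ℝ) (hf : Continuous f)
    (r₁ r₂ K : ℝ) (hr₁ : 0 < r₁) (hr₁₂ : r₁ < r₂) (hK : 0 < K)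
    (u u' : ℝ → ℝ)
    (hu : ∀ r ∈ Icc r₁ r₂, HasDerivAt u (u' r) r)
    (hode : ∀ r ∈ Icc r₁ r₂,
      HasDerivAt u' (-(((N:ℝ) - 1) / r * u' r + f (u r))) r)
    (hbound : ∀ r ∈ Icc r₁ r₂, |u' r| ≤ K)
    (hmono : MonotoneOn u (Icc r₁ r₂) ∨ AntitoneOn u (Icc r₁ r₂))
    (hIpos : 0 < (u' r₁) ^ 2 / 2 + ∫ t in (0:ℝ)..(u r₁), f t) :
    (u' r₂) ^ 2 / 2 + (∫ t in (0:ℝ)..(u r₂), f t) ≥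
      ((u' r₁) ^ 2 / 2 + ∫ t in (0:ℝ)..(u r₁), f t) *
        (1 - K / ((u' r₁) ^ 2 / 2 + ∫ t in (0:ℝ)..(u r₁), f t) *
          (((N:ℝ) - 1) * |u r₂ - u r₁| / r₁)) := by
  set c : ℝ := (N:ℝ) - 1 with hc
  have hcpos : 0 < c := by
    have : (2:ℝ) ≤ (N:ℝ) := by exact_mod_cast hN
    simp only [hc]; linarith
  set A : ℝ := (u' r₁) ^ 2 / 2 + ∫ t in (0:ℝ)..(u r₁), f t with hA
  -- reduce to I r₁ ≤ I r₂ + (c*K/r₁) * |u r₂ - u r₁|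
  have key : A ≤ ((u' r₂) ^ 2 / 2 + ∫ t in (0:ℝ)..(u r₂), f t)
      + c * K / r₁ * |u r₂ - u r₁| := by
    set C : ℝ := c * K / r₁ with hC
    have hCpos : 0 < C := by positivity
    -- helper : interior sign of u'
    have hint : interior (Icc r₁ r₂) = Ioo r₁ r₂ := interior_Icc
    have hslope : ∀ x ∈ Ioo r₁ r₂,
        Filter.Tendsto (slope u x) (nhdsWithin x (Ioi x)) (nhds (u' x)) := by
      intro x hx
      have h := hasDerivAt_iff_tendsto_slope.mp (hu x ⟨hx.1.le, hx.2.le⟩)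
      exact h.mono_left (nhdsWithin_mono x (fun y hy => Set.mem_compl_singleton_iff.mpr (ne_of_gt hy)))
    rcases hmono with hm | hm
    · -- monotone case: u' ≥ 0 on interior
      have hsign : ∀ x ∈ Ioo r₁ r₂, 0 ≤ u' x := by
        intro x hx
        refine ge_of_tendsto (hslope x hx) ?_
        filter_upwards [Ioo_mem_nhdsGT_of_mem (⟨le_refl x, hx.2⟩ : x ∈ Ico x r₂)]
          with y hy
        rw [slope_def_field]
        have h1 : u x ≤ u y :=
          hm ⟨hx.1.le, hx.2.le⟩ ⟨(hx.1.trans hy.1).le, hy.2.le⟩ hy.1.le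
        have : (0:ℝ) < y - x := by linarith [hy.1]
        rw [div_eq_mul_inv]
        exact mul_nonneg (by linarith) (inv_nonneg.mpr this.le)
      -- G = I + C*u is monotone on Icc
      have hG : MonotoneOn
          (fun s => (u' s) ^ 2 / 2 + (∫ t in (0:ℝ)..(u s), f t) + C * u s)
          (Icc r₁ r₂) := by
        apply monotoneOn_of_hasDerivWithinAt_nonneg (convex_Icc r₁ r₂)
          (f' := fun s => -(c / s * (u' s) ^ 2) + C * u' s)
        · intro x hx
          exact (energy_hasDerivAt c f hf u u' C x (hu x hx) (hode x hx)).continuousAt.continuousWithinAt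
        · intro x hx
          rw [hint] at hx
          exact (energy_hasDerivAt c f hf u u' C x (hu x ⟨hx.1.le, hx.2.le⟩)
            (hode x ⟨hx.1.le, hx.2.le⟩)).hasDerivWithinAt
        · intro x hx
          rw [hint] at hx
          have h0 : 0 ≤ u' x := hsign x hx
          have hxr : r₁ < x := hx.1
          have hK' : u' x ≤ K := (abs_le.mp (hbound x ⟨hx.1.le, hx.2.le⟩)).2
          have h1 : c / x * (u' x) ^ 2 ≤ c / r₁ * (K * u' x) := by
            have hd : c / x ≤ c / r₁ := by
              apply div_le_div_of_nonneg_left hcpos.le hr₁ hxr.le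
            have hsq : (u' x) ^ 2 ≤ K * u' x := by nlinarith
            have hx0 : (0:ℝ) < x := hr₁.trans hxr
            have h2 : 0 ≤ c / x := div_nonneg hcpos.le hx0.le
            calc c / x * (u' x) ^ 2 ≤ c / x * (K * u' x) := by
                  apply mul_le_mul_of_nonneg_left hsq h2
              _ ≤ c / r₁ * (K * u' x) := by
                  apply mul_le_mul_of_nonneg_right hd (mul_nonneg hK.le h0)
          have : C * u' x = c / r₁ * (K * u' x) := by
            rw [hC]; ring
          linarith
      have h12 := hG ⟨le_refl r₁, hr₁₂.le⟩ ⟨hr₁₂.le, le_refl r₂⟩ hr₁₂.le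
      have hLe : u r₁ ≤ u r₂ := hm ⟨le_refl r₁, hr₁₂.le⟩ ⟨hr₁₂.le, le_refl r₂⟩ hr₁₂.le
      have habs : |u r₂ - u r₁| = u r₂ - u r₁ := abs_of_nonneg (by linarith)
      simp only [hA]
      rw [habs]
      simp only [hC] at h12 ⊢
      linarith [h12]
    · -- antitone case: u' ≤ 0 on interior
      have hsign : ∀ x ∈ Ioo r₁ r₂, u' x ≤ 0 := by
        intro x hx
        refine le_of_tendsto (hslope x hx) ?_
        filter_upwards [Ioo_mem_nhdsGT_of_mem (⟨le_refl x, hx.2⟩ : x ∈ Ico x r₂)]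
          with y hy
        rw [slope_def_field]
        have h1 : u y ≤ u x :=
          hm ⟨hx.1.le, hx.2.le⟩ ⟨(hx.1.trans hy.1).le, hy.2.le⟩ hy.1.le
        have hyx : (0:ℝ) < y - x := by linarith [hy.1]
        apply div_nonpos_of_nonpos_of_nonneg (by linarith) hyx.le
      have hG : MonotoneOn
          (fun s => (u' s) ^ 2 / 2 + (∫ t in (0:ℝ)..(u s), f t) + (-C) * u s)
          (Icc r₁ r₂) := by
        apply monotoneOn_of_hasDerivWithinAt_nonneg (convex_Icc r₁ r₂)
          (f' := fun s => -(c / s * (u' s) ^ 2) + (-C) * u' s)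
        · intro x hx
          exact (energy_hasDerivAt c f hf u u' (-C) x (hu x hx) (hode x hx)).continuousAt.continuousWithinAt
        · intro x hx
          rw [hint] at hx
          exact (energy_hasDerivAt c f hf u u' (-C) x (hu x ⟨hx.1.le, hx.2.le⟩)
            (hode x ⟨hx.1.le, hx.2.le⟩)).hasDerivWithinAt
        · intro x hx
          rw [hint] at hx
          have h0 : u' x ≤ 0 := hsign x hx
          have hxr : r₁ < x := hx.1
          have hK' : -K ≤ u' x := (abs_le.mp (hbound x ⟨hx.1.le, hx.2.le⟩)).1
          have h1 : c / x * (u' x) ^ 2 ≤ c / r₁ * (K * (-u' x)) := by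
            have hd : c / x ≤ c / r₁ := by
              apply div_le_div_of_nonneg_left hcpos.le hr₁ hxr.le
            have hsq : (u' x) ^ 2 ≤ K * (-u' x) := by nlinarith
            have hx0 : (0:ℝ) < x := hr₁.trans hxr
            have h2 : 0 ≤ c / x := div_nonneg hcpos.le hx0.le
            calc c / x * (u' x) ^ 2 ≤ c / x * (K * (-u' x)) := by
                  apply mul_le_mul_of_nonneg_left hsq h2
              _ ≤ c / r₁ * (K * (-u' x)) := by
                  apply mul_le_mul_of_nonneg_right hd (mul_nonneg hK.le (by linarith))
          have : (-C) * u' x = c / r₁ * (K * (-u' x)) := by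
            rw [hC]; ring
          linarith
      have h12 := hG ⟨le_refl r₁, hr₁₂.le⟩ ⟨hr₁₂.le, le_refl r₂⟩ hr₁₂.le
      have hLe : u r₂ ≤ u r₁ := hm ⟨le_refl r₁, hr₁₂.le⟩ ⟨hr₁₂.le, le_refl r₂⟩ hr₁₂.le
      have habs : |u r₂ - u r₁| = u r₁ - u r₂ := by
        rw [abs_of_nonpos (by linarith)]; ring
      simp only [hA]
      rw [habs]
      simp only [hC] at h12 ⊢
      linarith [h12]
  -- algebra: A * (1 - K/A * (c*L/r₁)) = A - K*c*L/r₁ ≤ I r₂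
  have hAne : A ≠ 0 := ne_of_gt hIpos
  have hEq : A * (1 - K / A * (c * |u r₂ - u r₁| / r₁)) =
      A - c * K / r₁ * |u r₂ - u r₁| := by
    field_simp
  rw [ge_iff_le]
  calc A * (1 - K / A * (c * |u r₂ - u r₁| / r₁))
      = A - c * K / r₁ * |u r₂ - u r₁| := hEq
    _ ≤ (u' r₂) ^ 2 / 2 + ∫ t in (0:ℝ)..(u r₂), f t := by linarith [key]
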